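/- The product of n matrices from a fixed finite subset S of UT_d(ℤ) has every entry bounded in absolute value by a polynomial in n (with the polynomial depending only on S and d). -/

import Mathlib

private lemma pow_aux' (a c s : ℕ) : a^(s+1) + (s+1)*c*a^s ≤ (a+c)^(s+1) := by
  induction s with
  | zero => simp
  | succ s ih =>
    calc a^(s+2) + (s+2)*c*a^(s+1)
        ≤ (a+c) * (a^(s+1) + (s+1)*c*a^s) := by
          have h : (a+c) * (a^(s+1) + (s+1)*c*a^s)
              = a^(s+2) + (s+2)*c*a^(s+1) + (s+1)*c^2*a^s := by ring
          rw [h]; exact Nat.le_add_right _ _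
      _ ≤ (a+c) * (a+c)^(s+1) := Nat.mul_le_mul_left _ ih
      _ = (a+c)^(s+2) := by ring

private lemma arith_aux (C n t : ℕ) :
    ((C+1)*(n+1))^t + t*(C*((C+1)*(n+1))^(t-1)) ≤ ((C+1)*(n+1+1))^t := by
  rcases t with _ | s
  · simp
  · have h : (C+1)*(n+1+1) = (C+1)*(n+1) + (C+1) := by ring
    rw [h]
    calc ((C+1)*(n+1))^(s+1) + (s+1)*(C*((C+1)*(n+1))^s)
        ≤ ((C+1)*(n+1))^(s+1) + (s+1)*(C+1)*((C+1)*(n+1))^s := by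
          have : (s+1)*(C*((C+1)*(n+1))^s) ≤ (s+1)*(C+1)*((C+1)*(n+1))^s := by
            rw [mul_assoc]; gcongr; omega
          omega
      _ ≤ ((C+1)*(n+1) + (C+1))^(s+1) := pow_aux' _ _ s

private lemma natAbs_sum_le' {α : Type*} (s : Finset α) (f : α → ℤ) :
    (∑ x ∈ s, f x).natAbs ≤ ∑ x ∈ s, (f x).natAbs := by
  classical
  induction s using Finset.induction with
  | empty => simp
  | @insert a s h ih =>
    rw [Finset.sum_insert h, Finset.sum_insert h]
    exact le_trans (Int.natAbs_add_le _ _) (by omega)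

private lemma key_aux {d : ℕ} {S : Finset (Matrix (Fin d) (Fin d) ℤ)}
    (hS : ∀ A ∈ S, (∀ i j : Fin d, j < i → A i j = 0) ∧ ∀ i : Fin d, A i i = 1)
    (C : ℕ) (hC : ∀ A ∈ S, ∀ i j : Fin d, (A i j).natAbs ≤ C) :
    ∀ L : List (Matrix (Fin d) (Fin d) ℤ), (∀ A ∈ L, A ∈ S) →
      ∀ i j : Fin d, (j < i → L.prod i j = 0) ∧
        (L.prod i j).natAbs ≤ ((C+1)*(L.length+1))^(j.val - i.val) := by
  intro L
  induction L with
  | nil =>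
    intro _ i j
    simp only [List.prod_nil, List.length_nil]
    constructor
    · intro hji
      simp [Matrix.one_apply, (Fin.ne_of_lt hji).symm]
    · rcases eq_or_ne i j with rfl | hne
      · simp [Matrix.one_apply]
      · simp only [Matrix.one_apply, if_neg hne, Int.natAbs_zero]
        exact Nat.zero_le _
  | cons A L ih =>
    intro hmem i j
    have hA : A ∈ S := hmem A List.mem_cons_self
    have ihL := ih (fun B hB => hmem B (List.mem_cons_of_mem A hB))
    have hAlow := (hS A hA).1
    have hAdiag := (hS A hA).2
    set n := L.length with hn
    set a := (C+1)*(n+1) with ha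
    have ha1 : 1 ≤ a := by
      have : 0 < (C+1)*(n+1) := Nat.mul_pos (Nat.succ_pos C) (Nat.succ_pos n)
      omega
    -- zero below diagonal
    have hzero : ∀ i j : Fin d, j < i → (A :: L).prod i j = 0 := by
      intro i j hji
      rw [List.prod_cons, Matrix.mul_apply]
      apply Finset.sum_eq_zero
      intro k _
      rcases lt_or_ge k i with hk | hk
      · rw [hAlow i k hk, zero_mul]
      · rw [(ihL k j).1 (lt_of_lt_of_le hji hk), mul_zero]
    refine ⟨hzero i j, ?_⟩
    rcases lt_or_ge j i with hji | hij
    · rw [hzero i j hji]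
      exact Nat.zero_le _
    -- main case i ≤ j
    rw [List.prod_cons, Matrix.mul_apply]
    have hsum : (∑ k : Fin d, A i k * L.prod k j)
        = ∑ k ∈ insert i (Finset.Ioc i j), A i k * L.prod k j := by
      symm
      apply Finset.sum_subset (Finset.subset_univ _)
      intro k _ hk
      simp only [Finset.mem_insert, Finset.mem_Ioc, not_or, not_and_or, not_lt, not_le] at hk
      rcases hk with ⟨hki, hle | hjk⟩
      · rw [hAlow i k (lt_of_le_of_ne hle hki), zero_mul]
      · rw [(ihL k j).1 hjk, mul_zero]
    rw [hsum]
    have hinotmem : i ∉ Finset.Ioc i j := by simp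
    rw [Finset.sum_insert hinotmem]
    have hlen : (A :: L).length = n + 1 := by simp [hn]
    rw [hlen]
    calc ((A i i * L.prod i j + ∑ k ∈ Finset.Ioc i j, A i k * L.prod k j)).natAbs
        ≤ (A i i * L.prod i j).natAbs
          + (∑ k ∈ Finset.Ioc i j, A i k * L.prod k j).natAbs := Int.natAbs_add_le _ _
      _ ≤ a^(j.val - i.val) + ∑ k ∈ Finset.Ioc i j, (A i k * L.prod k j).natAbs := by
          gcongr
          · rw [hAdiag i, one_mul]; exact (ihL i j).2
          · exact natAbs_sum_le' _ _
      _ ≤ a^(j.val - i.val) + ∑ _k ∈ Finset.Ioc i j, C * a^(j.val - i.val - 1) := by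
          gcongr a^(j.val - i.val) + ∑ k ∈ Finset.Ioc i j, ?_ with k hk
          simp only [Finset.mem_Ioc] at hk
          rw [Int.natAbs_mul]
          have h1 : (A i k).natAbs ≤ C := hC A hA i k
          have h2 : (L.prod k j).natAbs ≤ a^(j.val - k.val) := (ihL k j).2
          have h3 : a^(j.val - k.val) ≤ a^(j.val - i.val - 1) := by
            apply Nat.pow_le_pow_right (by omega)
            have h4 : i.val < k.val := hk.1
            have h5 : k.val ≤ j.val := hk.2
            omega
          exact Nat.mul_le_mul h1 (le_trans h2 h3)
      _ = a^(j.val - i.val)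
          + (Finset.Ioc i j).card * (C * a^(j.val - i.val - 1)) := by
          rw [Finset.sum_const, smul_eq_mul]
      _ = a^(j.val - i.val) + (j.val - i.val) * (C * a^(j.val - i.val - 1)) := by
          rw [Fin.card_Ioc]
      _ ≤ ((C+1)*(n+1+1))^(j.val - i.val) := arith_aux C n _

set_option maxHeartbeats 1000000 in
/-- The entries of a product of `n` matrices from a fixed finite subset `S` of
`UT_d(ℤ)` are bounded in absolute value by a polynomial in `n` (depending only on `S` and `d`). -/
theorem prod_from_finite_set_poly_bound (d : ℕ) (S : Finset (Matrix (Fin d) (Fin d) ℤ))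
    (hS : ∀ A ∈ S, (∀ i j : Fin d, j < i → A i j = 0) ∧ ∀ i : Fin d, A i i = 1) :
    ∃ p : Polynomial ℕ, ∀ (n : ℕ) (M : Fin n → Matrix (Fin d) (Fin d) ℤ),
      (∀ k : Fin n, M k ∈ S) →
      ∀ i j : Fin d, (((List.ofFn M).prod) i j).natAbs ≤ p.eval n := by
  classical
  obtain ⟨C, hC⟩ : ∃ C : ℕ, ∀ A ∈ S, ∀ i j : Fin d, (A i j).natAbs ≤ C := by
    refine ⟨S.sup fun A => Finset.univ.sup fun i => Finset.univ.sup
      fun j => (A i j).natAbs, fun A hA i j => ?_⟩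
    refine le_trans ?_ (Finset.le_sup (f := fun A =>
      Finset.univ.sup fun i => Finset.univ.sup fun j => (A i j).natAbs) hA)
    refine le_trans ?_ (Finset.le_sup (f := fun i =>
      Finset.univ.sup fun j => (A i j).natAbs) (Finset.mem_univ i))
    exact Finset.le_sup (f := fun j => (A i j).natAbs) (Finset.mem_univ j)
  refine ⟨(Polynomial.C (C+1) * (Polynomial.X + 1))^d, ?_⟩
  intro n M hM i j
  have hmem : ∀ A ∈ List.ofFn M, A ∈ S := by
    intro A hA
    obtain ⟨k, rfl⟩ := List.mem_ofFn.mp hA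
    exact hM k
  have hb := (key_aux hS C hC (List.ofFn M) hmem i j).2
  rw [List.length_ofFn] at hb
  have heval : ((Polynomial.C (C+1) * (Polynomial.X + 1))^d : Polynomial ℕ).eval n
      = ((C+1)*(n+1))^d := by
    simp [Polynomial.eval_pow, Polynomial.eval_mul, Polynomial.eval_add]
  rw [heval]
  refine le_trans hb ?_
  apply Nat.pow_le_pow_right (Nat.mul_pos (Nat.succ_pos C) (Nat.succ_pos n))
  omega
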